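/- There is a Hopf algebra homomorphism θ: U_{q'}(sl(2)) → U_q(osp(1|2)) with q = -q'^2, determined by θ(E') = -(q'+q'^{-1})·σE, θ(F') = F, θ([H']) = -(q'+q'^{-1})·σ[H], θ(K'^{±1}) = σK^{±1}; in particular θ respects the defining relations: θ(K'E') = θ(-q·E'K'), θ(F'K') = θ(-q·K'F'), θ(E'F' - F'E') = θ([H']), and θ((q'-q'^{-1})[H']) = θ(K' - K'^{-1}). -/
import Mathlib


/-- There is a Hopf algebra homomorphism `θ : U_{q'}(sl2) → U_q(osp(1|2))`, `q = -q'^2`,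
with `θ(E') = -(q'+q'⁻¹)σE`, `θ(F') = F`, `θ([H']) = -(q'+q'⁻¹)σ[H]`, `θ(K'^{±1}) = σK^{±1}`.
We formalise this by showing that in any ring `A` containing elements satisfying the
defining relations of `U_q(osp(1|2))` (with central invertible scalar `q'`, inverse `q'i`),
the proposed images satisfy the defining relations of `U_{q'}(sl(2))`. -/
theorem stmt6 {A : Type*} [Ring A] (q' q'i : A)
    (hq'c : ∀ a : A, q' * a = a * q') (hq'ic : ∀ a : A, q'i * a = a * q'i)
    (hq'inv : q' * q'i = 1)
    (σ E F H K Ki : A)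
    -- defining relations of U_q(osp(1|2)), with q = -q'^2 and q⁻¹ = -q'i^2
    (hσ2 : σ ^ 2 = 1) (hσE : σ * E * σ = -E) (hσF : σ * F * σ = -F)
    (hσK : σ * K = K * σ) (hσKi : σ * Ki = Ki * σ) (hσH : σ * H = H * σ)
    (hKKi : K * Ki = 1) (hKiK : Ki * K = 1)
    (hKE : K * E = -(q' ^ 2) * E * K)
    (hKF : K * F = -(q'i ^ 2) * F * K)
    (hEF : E * F + F * E = H)
    (hH : (-(q' ^ 2) - -(q'i ^ 2)) * H = K - Ki) :
    -- the sl(2) relations for the images θ(K') = σK, θ(K'⁻¹) = σKi,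
    -- θ(E') = -(q'+q'i)σE, θ(F') = F, θ([H']) = -(q'+q'i)σH
    (σ * K) * (σ * Ki) = 1 ∧ (σ * Ki) * (σ * K) = 1 ∧
      (σ * K) * (-(q' + q'i) * (σ * E)) = q' ^ 2 * (-(q' + q'i) * (σ * E)) * (σ * K) ∧
      (σ * K) * F = q'i ^ 2 * F * (σ * K) ∧
      (-(q' + q'i) * (σ * E)) * F - F * (-(q' + q'i) * (σ * E)) = -(q' + q'i) * (σ * H) ∧
      (q' - q'i) * (-(q' + q'i) * (σ * H)) = σ * K - σ * Ki := by
  have hσσ : σ * σ = 1 := by rw [← pow_two]; exact hσ2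
  have hσE2 : σ * E = -(E * σ) := by
    calc σ * E = σ * E * (σ * σ) := by rw [hσσ, mul_one]
      _ = (σ * E * σ) * σ := by noncomm_ring
      _ = -E * σ := by rw [hσE]
      _ = -(E * σ) := by rw [neg_mul]
  have hσF2 : σ * F = -(F * σ) := by
    calc σ * F = σ * F * (σ * σ) := by rw [hσσ, mul_one]
      _ = (σ * F * σ) * σ := by noncomm_ring
      _ = -F * σ := by rw [hσF]
      _ = -(F * σ) := by rw [neg_mul]
  have hEσ : E * σ = -(σ * E) := by rw [hσE2, neg_neg]
  have hFσ : F * σ = -(σ * F) := by rw [hσF2, neg_neg]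
  have hsc : ∀ a : A, (q' + q'i) * a = a * (q' + q'i) := fun a => by
    rw [add_mul, mul_add, hq'c, hq'ic]
  have h2 : ∀ a : A, q' ^ 2 * a = a * q' ^ 2 := fun a => by
    calc q' ^ 2 * a = q' * (q' * a) := by rw [pow_two, mul_assoc]
      _ = q' * (a * q') := by rw [hq'c a]
      _ = (q' * a) * q' := by rw [mul_assoc]
      _ = (a * q') * q' := by rw [hq'c a]
      _ = a * q' ^ 2 := by rw [mul_assoc, ← pow_two]
  have h2i : ∀ a : A, q'i ^ 2 * a = a * q'i ^ 2 := fun a => by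
    calc q'i ^ 2 * a = q'i * (q'i * a) := by rw [pow_two, mul_assoc]
      _ = q'i * (a * q'i) := by rw [hq'ic a]
      _ = (q'i * a) * q'i := by rw [mul_assoc]
      _ = (a * q'i) * q'i := by rw [hq'ic a]
      _ = a * q'i ^ 2 := by rw [mul_assoc, ← pow_two]
  have hq'inv2 : q'i * q' = 1 := (hq'ic q').trans hq'inv
  refine ⟨?_, ?_, ?_, ?_, ?_, ?_⟩
  · calc (σ * K) * (σ * Ki) = σ * (K * σ) * Ki := by noncomm_ring
      _ = σ * (σ * K) * Ki := by rw [hσK]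
      _ = (σ * σ) * (K * Ki) := by noncomm_ring
      _ = 1 := by rw [hσσ, hKKi, one_mul]
  · calc (σ * Ki) * (σ * K) = σ * (Ki * σ) * K := by noncomm_ring
      _ = σ * (σ * Ki) * K := by rw [hσKi]
      _ = (σ * σ) * (Ki * K) := by noncomm_ring
      _ = 1 := by rw [hσσ, hKiK, one_mul]
  · calc (σ * K) * (-(q' + q'i) * (σ * E))
        = -(((σ * K) * (q' + q'i)) * (σ * E)) := by noncomm_ring
      _ = -(((q' + q'i) * (σ * K)) * (σ * E)) := by rw [hsc (σ * K)]
      _ = -((q' + q'i) * (σ * ((K * σ) * E))) := by noncomm_ring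
      _ = -((q' + q'i) * (σ * ((σ * K) * E))) := by rw [hσK]
      _ = -((q' + q'i) * ((σ * σ) * (K * E))) := by noncomm_ring
      _ = -((q' + q'i) * (K * E)) := by rw [hσσ, one_mul]
      _ = -((q' + q'i) * (-(q' ^ 2) * E * K)) := by rw [hKE]
      _ = ((q' + q'i) * q' ^ 2) * (E * K) := by noncomm_ring
      _ = (q' ^ 2 * (q' + q'i)) * (E * K) := by rw [hsc (q' ^ 2)]
      _ = q' ^ 2 * ((q' + q'i) * ((σ * σ) * (E * K))) := by rw [hσσ, one_mul, mul_assoc]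
      _ = q' ^ 2 * ((q' + q'i) * (σ * ((σ * E) * K))) := by noncomm_ring
      _ = q' ^ 2 * ((q' + q'i) * (σ * (-(E * σ) * K))) := by rw [hσE2]
      _ = q' ^ 2 * (-(q' + q'i) * (σ * E)) * (σ * K) := by noncomm_ring
  · calc (σ * K) * F = σ * (K * F) := by rw [mul_assoc]
      _ = σ * (-(q'i ^ 2) * F * K) := by rw [hKF]
      _ = -((σ * q'i ^ 2) * (F * K)) := by noncomm_ring
      _ = -((q'i ^ 2 * σ) * (F * K)) := by rw [h2i σ]
      _ = -(q'i ^ 2 * ((σ * F) * K)) := by noncomm_ring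
      _ = -(q'i ^ 2 * ((-(F * σ)) * K)) := by rw [hσF2]
      _ = q'i ^ 2 * F * (σ * K) := by noncomm_ring
  · calc (-(q' + q'i) * (σ * E)) * F - F * (-(q' + q'i) * (σ * E))
        = -((q' + q'i) * (σ * (E * F))) + (F * (q' + q'i)) * (σ * E) := by noncomm_ring
      _ = -((q' + q'i) * (σ * (E * F))) + ((q' + q'i) * F) * (σ * E) := by rw [hsc F]
      _ = -((q' + q'i) * (σ * (E * F))) + (q' + q'i) * ((F * σ) * E) := by noncomm_ring
      _ = -((q' + q'i) * (σ * (E * F))) + (q' + q'i) * ((-(σ * F)) * E) := by rw [hFσ]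
      _ = -((q' + q'i) * (σ * (E * F) + σ * (F * E))) := by noncomm_ring
      _ = -((q' + q'i) * (σ * (E * F + F * E))) := by rw [mul_add σ (E * F) (F * E), mul_add]
      _ = -((q' + q'i) * (σ * H)) := by rw [hEF]
      _ = -(q' + q'i) * (σ * H) := by rw [neg_mul]
  · calc (q' - q'i) * (-(q' + q'i) * (σ * H))
        = -((q' * q') * (σ * H)) - (q' * q'i) * (σ * H)
            + (q'i * q') * (σ * H) + (q'i * q'i) * (σ * H) := by noncomm_ring
      _ = -((q' * q') * (σ * H)) - 1 * (σ * H)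
            + 1 * (σ * H) + (q'i * q'i) * (σ * H) := by rw [hq'inv, hq'inv2]
      _ = (q'i ^ 2 * σ) * H - (q' ^ 2 * σ) * H := by noncomm_ring
      _ = (σ * q'i ^ 2) * H - (σ * q' ^ 2) * H := by rw [h2i σ, h2 σ]
      _ = σ * ((-(q' ^ 2) - -(q'i ^ 2)) * H) := by noncomm_ring
      _ = σ * (K - Ki) := by rw [hH]
      _ = σ * K - σ * Ki := by rw [mul_sub]
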